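/- Let A be an n×n real matrix (n ≥ 1) such that A + Aᵀ is negative definite, and let p_1,…,p_{n−1} ≥ 0. Then the feasible set S = {M ⪰ 0 : ⟨A_i, M⟩ = −p_i for i = 1,…,n−1} of the associated semidefinite program is nonempty, and there exists M₀ ∈ S such that ⟨A_n, M₀⟩ ≥ ⟨A_n, M⟩ for every M ∈ S; that is, the semidefinite program attains its maximum. -/

import Mathlib

open Matrix

/-- Trace inner product on square matrices: ⟨X, Y⟩ = tr(XY). -/
noncomputable def ip {m : ℕ} (X Y : Matrix (Fin m) (Fin m) ℝ) : ℝ := (X * Y).trace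

/-- For an m×m matrix `A`, the symmetric matrix `A_i = e_i a_iᵀ + a_i e_iᵀ`,
whose i-th row and column equal the i-th row of `A` (with (i,i) entry `2 A i i`),
all other entries zero. -/
noncomputable def sdpMat {m : ℕ} (A : Matrix (Fin m) (Fin m) ℝ) (i : Fin m) :
    Matrix (Fin m) (Fin m) ℝ :=
  Matrix.of fun k l => (if k = i then A i l else 0) + (if l = i then A i k else 0)

/-- Feasibility for the semidefinite program associated to an (n+1)×(n+1) matrix `A`
and data `p`: `M ⪰ 0` and `⟨A_i, M⟩ = -p_i` for every non-final index `i`. -/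
def Feasible {n : ℕ} (A : Matrix (Fin (n + 1)) (Fin (n + 1)) ℝ)
    (p : Fin (n + 1) → ℝ) (M : Matrix (Fin (n + 1)) (Fin (n + 1)) ℝ) : Prop :=
  M.PosSemidef ∧ ∀ i : Fin (n + 1), i ≠ Fin.last n → ip (sdpMat A i) M = -(p i)

/- ### Auxiliary lemmas -/

lemma ip_eq_sum {m : ℕ} (X M : Matrix (Fin m) (Fin m) ℝ) :
    ip X M = ∑ k, ∑ l, X k l * M l k := by
  simp [ip, Matrix.trace, Matrix.diag, Matrix.mul_apply]

lemma ip_sdp {m : ℕ} (A : Matrix (Fin m) (Fin m) ℝ) (i : Fin m)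
    (M : Matrix (Fin m) (Fin m) ℝ) :
    ip (sdpMat A i) M = (∑ l, A i l * M l i) + (∑ k, A i k * M i k) := by
  rw [ip_eq_sum]
  simp only [sdpMat, Matrix.of_apply, add_mul, Finset.sum_add_distrib, ite_mul, zero_mul]
  congr 1
  · rw [Finset.sum_comm]
    simp [Finset.sum_ite_eq]
  · simp [Finset.sum_ite_eq]

lemma ip_sdp_diag {m : ℕ} (A : Matrix (Fin m) (Fin m) ℝ) (i : Fin m) (d : Fin m → ℝ) :
    ip (sdpMat A i) (Matrix.diagonal d) = 2 * (A i i * d i) := by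
  rw [ip_sdp]
  simp [Matrix.diagonal_apply, mul_ite, Finset.sum_ite_eq, Finset.sum_ite_eq', two_mul]

lemma sum_ip_sdp {m : ℕ} (A M : Matrix (Fin m) (Fin m) ℝ) :
    ∑ i, ip (sdpMat A i) M = ((A + Aᵀ) * M).trace := by
  simp only [ip_sdp]
  simp only [Matrix.trace, Matrix.diag, Matrix.mul_apply, Matrix.add_apply,
    Matrix.transpose_apply, add_mul, Finset.sum_add_distrib]
  congr 1
  rw [Finset.sum_comm]

lemma continuous_ip {m : ℕ} (X : Matrix (Fin m) (Fin m) ℝ) :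
    Continuous fun M : Matrix (Fin m) (Fin m) ℝ => ip X M :=
  (continuous_const.matrix_mul continuous_id).matrix_trace

lemma isClosed_posSemidef {m : ℕ} :
    IsClosed {M : Matrix (Fin m) (Fin m) ℝ | M.PosSemidef} := by
  have heq : {M : Matrix (Fin m) (Fin m) ℝ | M.PosSemidef} =
      {M : Matrix (Fin m) (Fin m) ℝ | Mᴴ = M} ∩
        ⋂ x : Fin m → ℝ, {M : Matrix (Fin m) (Fin m) ℝ | 0 ≤ star x ⬝ᵥ M *ᵥ x} := by
    ext M
    simp only [Set.mem_setOf_eq, Set.mem_inter_iff, Set.mem_iInter]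
    exact Matrix.posSemidef_iff_dotProduct_mulVec
  rw [heq]
  refine (isClosed_eq continuous_id.matrix_conjTranspose continuous_id).inter
    (isClosed_iInter fun x => isClosed_le continuous_const ?_)
  exact Continuous.dotProduct continuous_const
    (continuous_id.matrix_mulVec continuous_const)

lemma quad_lower_bound {m : ℕ} (N : Matrix (Fin (m+1)) (Fin (m+1)) ℝ) (hN : N.PosDef) :
    ∃ ε > 0, ∀ x : Fin (m+1) → ℝ, ε * (∑ j, x j ^ 2) ≤ x ⬝ᵥ N *ᵥ x := by
  set f : (Fin (m+1) → ℝ) → ℝ := fun x => x ⬝ᵥ N *ᵥ x with hf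
  have hfc : Continuous f := by
    simp only [hf, dotProduct, mulVec]
    exact continuous_finset_sum _ fun i _ => (continuous_apply i).mul
      (continuous_finset_sum _ fun k _ => (continuous_const.mul (continuous_apply k)))
  have hsc : Continuous fun x : Fin (m+1) → ℝ => ∑ j, x j ^ 2 :=
    continuous_finset_sum _ fun j _ => (continuous_apply j).pow 2
  set S : Set (Fin (m+1) → ℝ) := {x | ∑ j, x j ^ 2 = 1} with hS
  have hSc : IsClosed S := isClosed_eq hsc continuous_const
  have hsub : S ⊆ Set.pi Set.univ fun _ : Fin (m+1) => Set.Icc (-1:ℝ) 1 := by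
    intro x hx j _
    have h1 : x j ^ 2 ≤ 1 := by
      rw [← hx]
      exact Finset.single_le_sum (fun k _ => sq_nonneg (x k)) (Finset.mem_univ j)
    constructor
    · nlinarith [sq_nonneg (x j + 1)]
    · nlinarith [sq_nonneg (x j - 1)]
  have hK : IsCompact S :=
    IsCompact.of_isClosed_subset (isCompact_univ_pi fun _ => isCompact_Icc) hSc hsub
  have hne : S.Nonempty := by
    refine ⟨Pi.single 0 1, ?_⟩
    show ∑ j, (Pi.single 0 1 : Fin (m+1) → ℝ) j ^ 2 = 1
    simp [Pi.single_apply, sq]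
  obtain ⟨x₀, hx₀S, hmin⟩ := hK.exists_isMinOn hne hfc.continuousOn
  have hx₀ne : x₀ ≠ 0 := by
    intro h
    rw [hS] at hx₀S
    simp [h] at hx₀S
  have hε : 0 < f x₀ := by
    have := hN.dotProduct_mulVec_pos hx₀ne
    simpa [f, dotProduct] using this
  refine ⟨f x₀, hε, fun x => ?_⟩
  rcases eq_or_ne x 0 with rfl | hx
  · simp [f]
  · have hsum : 0 < ∑ j, x j ^ 2 := by
      obtain ⟨j, hj⟩ := Function.ne_iff.mp hx
      exact Finset.sum_pos' (fun k _ => sq_nonneg _)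
        ⟨j, Finset.mem_univ j, lt_of_le_of_ne (sq_nonneg _) (Ne.symm (pow_ne_zero 2 hj))⟩
    set t : ℝ := Real.sqrt (∑ j, x j ^ 2) with ht
    have htpos : 0 < t := Real.sqrt_pos.mpr hsum
    have ht2 : t ^ 2 = ∑ j, x j ^ 2 := Real.sq_sqrt hsum.le
    have hyS : (t⁻¹ • x) ∈ S := by
      rw [hS]
      simp only [Set.mem_setOf_eq, Pi.smul_apply, smul_eq_mul, mul_pow]
      rw [← Finset.mul_sum, ← ht2]
      field_simp
    have hy : f x₀ ≤ f (t⁻¹ • x) := hmin hyS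
    have hfy : f (t⁻¹ • x) = t⁻¹ * (t⁻¹ * f x) := by
      simp [f, smul_dotProduct, dotProduct_smul, Matrix.mulVec_smul]
    rw [hfy] at hy
    have : f x₀ * t ^ 2 ≤ f x := by
      rw [sq]
      calc f x₀ * (t * t) ≤ (t⁻¹ * (t⁻¹ * f x)) * (t * t) := by
            apply mul_le_mul_of_nonneg_right hy (by positivity)
        _ = f x := by field_simp
    show f x₀ * (∑ j, x j ^ 2) ≤ f x
    calc f x₀ * (∑ j, x j ^ 2) = f x₀ * t ^ 2 := by rw [ht2]
      _ ≤ f x := this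

lemma trace_mul_lower_bound {m : ℕ} (N M : Matrix (Fin m) (Fin m) ℝ) (hM : M.PosSemidef)
    (ε : ℝ) (hq : ∀ x : Fin m → ℝ, ε * (∑ j, x j ^ 2) ≤ x ⬝ᵥ N *ᵥ x) :
    ε * M.trace ≤ (N * M).trace := by
  obtain ⟨B, rfl⟩ : ∃ B : Matrix (Fin m) (Fin m) ℝ, M = Bᴴ * B := by
    open scoped MatrixOrder in
    obtain ⟨B, hB⟩ := CStarAlgebra.nonneg_iff_eq_star_mul_self.mp hM.nonneg
    exact ⟨B, hB⟩
  have h1 : (Bᴴ * B).trace = ∑ i, ∑ j, B i j ^ 2 := by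
    rw [Finset.sum_comm]
    simp [Matrix.trace, Matrix.diag, Matrix.mul_apply, Matrix.conjTranspose_apply, sq]
  have h2 : (N * (Bᴴ * B)).trace = ∑ i, (B i) ⬝ᵥ N *ᵥ (B i) := by
    rw [← Matrix.mul_assoc, Matrix.trace_mul_cycle]
    simp only [Matrix.trace, Matrix.diag, Matrix.mul_apply, Matrix.conjTranspose_apply,
      dotProduct, mulVec, star_trivial, Finset.sum_mul, Finset.mul_sum]
    apply Finset.sum_congr rfl
    intro i _
    rw [Finset.sum_comm]
    apply Finset.sum_congr rfl
    intro k _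
    apply Finset.sum_congr rfl
    intro l _
    ring
  rw [h1, h2, Finset.mul_sum]
  exact Finset.sum_le_sum fun i _ => hq (B i)

lemma entry_le_trace {m : ℕ} (M : Matrix (Fin m) (Fin m) ℝ) (hM : M.PosSemidef) (k l : Fin m) :
    |M k l| ≤ M.trace := by
  have hd : ∀ j, 0 ≤ M j j := by
    intro j
    have := hM.dotProduct_mulVec_nonneg (Pi.single j 1)
    simpa [dotProduct, mulVec, Pi.single_apply] using this
  have hdt : ∀ j, M j j ≤ M.trace := by
    intro j
    exact Finset.single_le_sum (fun k _ => hd k) (Finset.mem_univ j)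
  rcases eq_or_ne k l with rfl | hkl
  · rw [abs_of_nonneg (hd k)]; exact hdt k
  · have hsym : M l k = M k l := by
      have := congrFun (congrFun hM.1 k) l
      simpa using this
    have h1 := hM.dotProduct_mulVec_nonneg (Pi.single k 1 + Pi.single l 1)
    have h2 := hM.dotProduct_mulVec_nonneg (Pi.single k 1 - Pi.single l 1)
    simp only [dotProduct, mulVec, Pi.add_apply, Pi.sub_apply, Pi.single_apply,
      star_trivial, mul_add, add_mul, sub_mul, mul_sub, Finset.sum_add_distrib,
      Finset.sum_sub_distrib, ite_mul, mul_ite, one_mul, mul_one, zero_mul, mul_zero,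
      Finset.sum_ite_eq, Finset.sum_ite_eq', Finset.mem_univ, if_true] at h1 h2
    rw [abs_le]
    constructor <;> nlinarith [hdt k, hdt l, hd k, hd l]

/-- If A + Aᵀ is negative definite and p_i ≥ 0, then the feasible set of the associated
semidefinite program is nonempty and the program attains its maximum. -/
theorem sdp_feasible_and_attains_max (n : ℕ)
    (A : Matrix (Fin (n + 1)) (Fin (n + 1)) ℝ)
    (hA : (-(A + Aᵀ)).PosDef)
    (p : Fin (n + 1) → ℝ) (hp : ∀ i : Fin (n + 1), i ≠ Fin.last n → 0 ≤ p i) :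
    (∃ M, Feasible A p M) ∧
      ∃ M₀, Feasible A p M₀ ∧
        ∀ M, Feasible A p M →
          ip (sdpMat A (Fin.last n)) M ≤ ip (sdpMat A (Fin.last n)) M₀ := by
  -- the diagonal entries of A are negative
  have hdiagA : ∀ i : Fin (n+1), 2 * A i i < 0 := by
    intro i
    have hx : (Pi.single i 1 : Fin (n+1) → ℝ) ≠ 0 := by
      intro h
      have := congrFun h i
      simp at this
    have h := hA.dotProduct_mulVec_pos hx
    simp only [dotProduct, mulVec, Pi.single_apply, star_trivial, Matrix.neg_apply,
      Matrix.add_apply, Matrix.transpose_apply, mul_ite, mul_one, mul_zero, ite_mul,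
      one_mul, zero_mul, Finset.sum_ite_eq, Finset.sum_ite_eq', Finset.mem_univ,
      if_true] at h
    linarith
  -- the feasible diagonal matrix
  set d : Fin (n+1) → ℝ := fun i => if i = Fin.last n then 0 else p i / (-(2 * A i i))
    with hdd
  have hdnn : ∀ i, 0 ≤ d i := by
    intro i
    rw [hdd]
    dsimp only
    split
    · exact le_refl 0
    · exact div_nonneg (hp i (by assumption)) (by linarith [hdiagA i])
  have hM₀ : Feasible A p (Matrix.diagonal d) := by
    constructor
    · exact Matrix.PosSemidef.diagonal hdnn
    · intro i hi
      rw [ip_sdp_diag, hdd]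
      dsimp only
      rw [if_neg hi]
      have hAne : 2 * A i i ≠ 0 := ne_of_lt (hdiagA i)
      have hAine : A i i ≠ 0 := fun h => hAne (by rw [h]; ring)
      field_simp
  have hval0 : ip (sdpMat A (Fin.last n)) (Matrix.diagonal d) = 0 := by
    rw [ip_sdp_diag, hdd]
    simp
  -- quantitative positive definiteness
  obtain ⟨ε, hεpos, hq⟩ := quad_lower_bound (-(A + Aᵀ)) hA
  set P : ℝ := ∑ i ∈ Finset.univ.erase (Fin.last n), p i with hPdef
  -- key identity for feasible M
  have key : ∀ M, Feasible A p M →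
      ip (sdpMat A (Fin.last n)) M = P - ((-(A + Aᵀ)) * M).trace := by
    intro M hM
    have hsum := sum_ip_sdp A M
    rw [← Finset.add_sum_erase _ _ (Finset.mem_univ (Fin.last n))] at hsum
    have herase : ∑ i ∈ Finset.univ.erase (Fin.last n), ip (sdpMat A i) M =
        ∑ i ∈ Finset.univ.erase (Fin.last n), -(p i) := by
      apply Finset.sum_congr rfl
      intro i hi
      exact hM.2 i (Finset.ne_of_mem_erase hi)
    rw [herase, Finset.sum_neg_distrib] at hsum
    have hneg : ((-(A + Aᵀ)) * M).trace = -(((A + Aᵀ) * M).trace) := by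
      rw [Matrix.neg_mul, Matrix.trace_neg]
    rw [hPdef, hneg]
    linarith [hsum]
  -- the compact set of feasible matrices with nonnegative objective value
  set C : ℝ := P / ε with hCdef
  set K : Set (Matrix (Fin (n+1)) (Fin (n+1)) ℝ) :=
    {M | Feasible A p M ∧ 0 ≤ ip (sdpMat A (Fin.last n)) M} with hKdef
  have hKsub : K ⊆ Set.pi Set.univ fun _ : Fin (n+1) =>
      Set.pi Set.univ fun _ : Fin (n+1) => Set.Icc (-C) C := by
    rintro M ⟨hMf, hMge⟩ k _
    intro l _
    have h1 : ε * M.trace ≤ ((-(A + Aᵀ)) * M).trace :=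
      trace_mul_lower_bound _ _ hMf.1 ε hq
    have h2 : ((-(A + Aᵀ)) * M).trace ≤ P := by
      have := key M hMf
      linarith [hMge, this]
    have htr : M.trace ≤ C := by
      rw [hCdef, le_div_iff₀ hεpos]
      linarith [h1, h2]
    have hent := entry_le_trace M hMf.1 k l
    have habs : |M k l| ≤ C := le_trans hent htr
    exact abs_le.mp habs
  have hKclosed : IsClosed K := by
    have hKeq : K = ({M : Matrix (Fin (n+1)) (Fin (n+1)) ℝ | M.PosSemidef} ∩
        ⋂ i : Fin (n+1), {M | i ≠ Fin.last n → ip (sdpMat A i) M = -(p i)}) ∩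
        {M | 0 ≤ ip (sdpMat A (Fin.last n)) M} := by
      ext M
      simp only [hKdef, Set.mem_setOf_eq, Set.mem_inter_iff, Set.mem_iInter, Feasible]
    rw [hKeq]
    refine (isClosed_posSemidef.inter (isClosed_iInter fun i => ?_)).inter
      (isClosed_le continuous_const (continuous_ip _))
    by_cases hi : i = Fin.last n
    · have : {M : Matrix (Fin (n+1)) (Fin (n+1)) ℝ |
          i ≠ Fin.last n → ip (sdpMat A i) M = -(p i)} = Set.univ := by
        ext M
        simp [hi]
      rw [this]
      exact isClosed_univ
    · have : {M : Matrix (Fin (n+1)) (Fin (n+1)) ℝ |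
          i ≠ Fin.last n → ip (sdpMat A i) M = -(p i)} =
          {M | ip (sdpMat A i) M = -(p i)} := by
        ext M
        simp [hi]
      rw [this]
      exact isClosed_eq (continuous_ip _) continuous_const
  have hKcompact : IsCompact K :=
    IsCompact.of_isClosed_subset
      (isCompact_univ_pi fun _ => isCompact_univ_pi fun _ => isCompact_Icc) hKclosed hKsub
  have hKne : K.Nonempty := ⟨Matrix.diagonal d, hM₀, le_of_eq hval0.symm⟩
  obtain ⟨M₁, hM₁K, hmax⟩ :=
    hKcompact.exists_isMaxOn hKne (continuous_ip (sdpMat A (Fin.last n))).continuousOn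
  refine ⟨⟨Matrix.diagonal d, hM₀⟩, M₁, hM₁K.1, ?_⟩
  intro M hM
  rcases le_or_gt (ip (sdpMat A (Fin.last n)) M) 0 with h | h
  · exact h.trans hM₁K.2
  · exact hmax ⟨hM, h.le⟩
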